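/- Let V and H be complex Hilbert spaces and ι : V → H an injective continuous ℂ-linear map with ‖ιv‖_H ≤ ‖v‖_V for all v ∈ V. Let W ⊆ V be a closed complex subspace, let P : V → V be the orthogonal projection onto W, and let u ∈ V satisfy ‖ιu‖_H = 1 and ‖ι(u − Pu)‖_H < 1. Then ⟨ι(Pu), ιu⟩_H ≠ 0, and for every w ∈ V with ⟨ιw, ιu⟩_H = 0 the element Qw := Pw − (⟨ι(Pw), ιu⟩_H / ⟨ι(Pu), ιu⟩_H) · Pu lies in W, satisfies ⟨ι(Qw), ιu⟩_H = 0, and obeys the estimate ‖w − Qw‖_V ≤ (1 + ‖Pu‖_V / (1 − ‖ι(u − Pu)‖_H)) · ‖w − Pw‖_V. -/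

import Mathlib

/-- Let `V`, `H` be complex Hilbert spaces, `ι : V → H` injective,
continuous, ℂ-linear with `‖ιv‖ ≤ ‖v‖`, `W ⊆ V` a closed complex subspace, `P` the
orthogonal projection onto `W`, and `u ∈ V` with `‖ιu‖ = 1` and `‖ι(u − Pu)‖ < 1`.
Then `⟨ι(Pu), ιu⟩ ≠ 0`, and for every `w` with `⟨ιw, ιu⟩ = 0` the corrected projection
`Qw := Pw − (⟨ι(Pw), ιu⟩/⟨ι(Pu), ιu⟩)·Pu` lies in `W`, satisfies `⟨ι(Qw), ιu⟩ = 0`, and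
`‖w − Qw‖ ≤ (1 + ‖Pu‖/(1 − ‖ι(u − Pu)‖))·‖w − Pw‖`.
(Recall that the paper's inner product `⟨a, b⟩`, linear in `a`, is Mathlib's `inner b a`.) -/
theorem stmt6 {V H : Type*}
    [NormedAddCommGroup V] [InnerProductSpace ℂ V] [CompleteSpace V]
    [NormedAddCommGroup H] [InnerProductSpace ℂ H] [CompleteSpace H]
    (ι : V →L[ℂ] H) (hinj : Function.Injective ι) (hnorm : ∀ v : V, ‖ι v‖ ≤ ‖v‖)
    (W : Submodule ℂ V) (hWclosed : IsClosed (W : Set V))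
    (P : V → V) (hPmem : ∀ v, P v ∈ W) (hPorth : ∀ v, v - P v ∈ Wᗮ)
    (u : V) (hu1 : ‖ι u‖ = 1) (hu2 : ‖ι (u - P u)‖ < 1) :
    (inner ℂ (ι u) (ι (P u)) : ℂ) ≠ 0 ∧
    ∀ w : V, (inner ℂ (ι u) (ι w) : ℂ) = 0 →
      (P w - ((inner ℂ (ι u) (ι (P w)) : ℂ) / (inner ℂ (ι u) (ι (P u)) : ℂ)) • P u) ∈ W ∧
      (inner ℂ (ι u)
        (ι (P w - ((inner ℂ (ι u) (ι (P w)) : ℂ) / (inner ℂ (ι u) (ι (P u)) : ℂ)) • P u)) : ℂ)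
        = 0 ∧
      ‖w - (P w - ((inner ℂ (ι u) (ι (P w)) : ℂ) / (inner ℂ (ι u) (ι (P u)) : ℂ)) • P u)‖
        ≤ (1 + ‖P u‖ / (1 - ‖ι (u - P u)‖)) * ‖w - P w‖ := by
  set c : ℂ := inner ℂ (ι u) (ι (P u)) with hc
  set δ : ℝ := ‖ι (u - P u)‖ with hδ
  have hδ0 : (0:ℝ) ≤ δ := norm_nonneg _
  have hkey : (1:ℝ) - δ ≤ ‖c‖ := by
    have heq : (1:ℂ) - c = inner ℂ (ι u) (ι (u - P u)) := by
      rw [map_sub, inner_sub_right, hc]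
      congr 1
      rw [inner_self_eq_norm_sq_to_K, hu1]
      norm_num
    have h1 : ‖(1:ℂ) - c‖ ≤ δ := by
      rw [heq]
      calc ‖(inner ℂ (ι u) (ι (u - P u)) : ℂ)‖ ≤ ‖ι u‖ * ‖ι (u - P u)‖ :=
            norm_inner_le_norm _ _
        _ = δ := by rw [hu1, one_mul]
    have h2 : ‖(1:ℂ)‖ - ‖c‖ ≤ ‖(1:ℂ) - c‖ := norm_sub_norm_le _ _
    simp only [norm_one] at h2
    linarith
  have hc0 : c ≠ 0 := by
    intro h
    rw [h, norm_zero] at hkey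
    linarith
  refine ⟨hc0, fun w hw => ?_⟩
  set β : ℂ := (inner ℂ (ι u) (ι (P w)) : ℂ) with hβ
  refine ⟨W.sub_mem (hPmem w) (W.smul_mem _ (hPmem u)), ?_, ?_⟩
  · rw [map_sub, inner_sub_right, map_smul, inner_smul_right, ← hc, ← hβ,
      div_mul_cancel₀ _ hc0, sub_self]
  · have hdecomp : w - (P w - (β / c) • P u) = (w - P w) + (β / c) • P u := by
      abel
    have hβbound : ‖β‖ ≤ ‖w - P w‖ := by
      have : β = - inner ℂ (ι u) (ι (w - P w)) := by
        rw [hβ, map_sub, inner_sub_right, hw]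
        ring
      rw [this, norm_neg]
      calc ‖(inner ℂ (ι u) (ι (w - P w)) : ℂ)‖ ≤ ‖ι u‖ * ‖ι (w - P w)‖ :=
            norm_inner_le_norm _ _
        _ = ‖ι (w - P w)‖ := by rw [hu1, one_mul]
        _ ≤ ‖w - P w‖ := hnorm _
    have hδpos : (0:ℝ) < 1 - δ := by linarith
    have hcpos : (0:ℝ) < ‖c‖ := lt_of_lt_of_le hδpos hkey
    have hsmul : ‖(β / c) • P u‖ ≤ ‖P u‖ / (1 - δ) * ‖w - P w‖ := by
      rw [norm_smul, norm_div]
      have h1 : ‖β‖ / ‖c‖ ≤ ‖w - P w‖ / (1 - δ) :=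
        div_le_div₀ (norm_nonneg _) hβbound hδpos hkey
      calc ‖β‖ / ‖c‖ * ‖P u‖ ≤ ‖w - P w‖ / (1 - δ) * ‖P u‖ :=
            mul_le_mul_of_nonneg_right h1 (norm_nonneg _)
        _ = ‖P u‖ / (1 - δ) * ‖w - P w‖ := by ring
    calc ‖w - (P w - (β / c) • P u)‖ = ‖(w - P w) + (β / c) • P u‖ := by rw [hdecomp]
      _ ≤ ‖w - P w‖ + ‖(β / c) • P u‖ := norm_add_le _ _
      _ ≤ ‖w - P w‖ + ‖P u‖ / (1 - δ) * ‖w - P w‖ := by linarith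
      _ = (1 + ‖P u‖ / (1 - δ)) * ‖w - P w‖ := by ring
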